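/- For every integer n ≥ 2 there exists a nonzero symmetric real n×n matrix T for which equality ‖tr(T)·T − T²‖ = (√(n−1)/2)·|T|² holds (for instance the diagonal matrix with entries (−√(n−1), 1, …, 1)); that is, the inequality ‖tr(T)·T − T²‖ ≤ (√(n−1)/2)·|T|² is sharp. -/

import Mathlib

open Matrix

lemma diag_clm_apply {n : ℕ} (v : Fin n → ℝ) (x : EuclideanSpace ℝ (Fin n)) (i : Fin n) :
    (Matrix.toEuclideanCLM (𝕜 := ℝ) (Matrix.diagonal v)) x i = v i * x i := by
  have h := Matrix.ofLp_toEuclideanCLM (𝕜 := ℝ) (Matrix.diagonal v) x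
  have : (Matrix.toEuclideanCLM (𝕜 := ℝ) (Matrix.diagonal v)) x i
      = Matrix.toLin' (Matrix.diagonal v) (WithLp.equiv _ _ x) i := by
    exact congrFun h i
  rw [this, Matrix.toLin'_apply, Matrix.mulVec_diagonal]
  rfl

lemma diag_clm_norm {n : ℕ} (v : Fin n → ℝ) (c : ℝ) (hc : 0 ≤ c)
    (hle : ∀ i, |v i| ≤ c) (i0 : Fin n) (heq : |v i0| = c) :
    ‖Matrix.toEuclideanCLM (𝕜 := ℝ) (Matrix.diagonal v)‖ = c := by
  apply le_antisymm
  · apply ContinuousLinearMap.opNorm_le_bound _ hc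
    intro x
    rw [EuclideanSpace.norm_eq, EuclideanSpace.norm_eq]
    rw [← Real.sqrt_sq hc, ← Real.sqrt_mul (by positivity)]
    apply Real.sqrt_le_sqrt
    rw [Finset.mul_sum]
    apply Finset.sum_le_sum
    intro i _
    rw [diag_clm_apply]
    have h1 := hle i
    have h2 : |v i * x i| ≤ c * |x i| := by
      rw [abs_mul]; exact mul_le_mul_of_nonneg_right h1 (abs_nonneg _)
    calc ‖v i * x i‖ ^ 2 = |v i * x i| ^ 2 := rfl
      _ ≤ (c * |x i|) ^ 2 := by
          exact pow_le_pow_left₀ (abs_nonneg _) h2 2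
      _ = c ^ 2 * ‖x i‖ ^ 2 := by rw [mul_pow]; norm_num [Real.norm_eq_abs, sq_abs]
  · have h := (Matrix.toEuclideanCLM (𝕜 := ℝ) (Matrix.diagonal v)).le_opNorm
      (EuclideanSpace.single i0 1)
    rw [EuclideanSpace.norm_single] at h
    have hx : (Matrix.toEuclideanCLM (𝕜 := ℝ) (Matrix.diagonal v))
        (EuclideanSpace.single i0 1) = EuclideanSpace.single i0 (v i0) := by
      refine PiLp.ext fun i => ?_
      rw [diag_clm_apply]
      by_cases hi : i = i0
      · subst hi; simp
      · simp [EuclideanSpace.single_apply, hi]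
    rw [hx, EuclideanSpace.norm_single] at h
    rw [Real.norm_eq_abs, heq, norm_one (α := ℝ), mul_one] at h
    exact h

/-- For every integer `n ≥ 2` there exists a nonzero symmetric real
`n × n` matrix `T` for which equality `‖tr(T)·T − T²‖ = (√(n−1)/2)·|T|²` holds, where
`‖·‖` is the `ℓ² → ℓ²` operator norm and `|T|² = tr (T * Tᵀ)` is the squared Frobenius
norm; that is, the inequality `‖tr(T)·T − T²‖ ≤ (√(n−1)/2)·|T|²` is sharp. -/
theorem statement1 (n : ℕ) (hn : 2 ≤ n) :
    ∃ T : Matrix (Fin n) (Fin n) ℝ, T ≠ 0 ∧ T.IsSymm ∧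
      ‖Matrix.toEuclideanCLM (𝕜 := ℝ) (T.trace • T - T * T)‖ =
        (Real.sqrt ((n : ℝ) - 1) / 2) * (T * Tᵀ).trace := by
  set s : ℝ := Real.sqrt ((n : ℝ) - 1) with hs
  have hn1 : (1 : ℝ) ≤ (n : ℝ) - 1 := by
    have : (2 : ℝ) ≤ (n : ℝ) := by exact_mod_cast hn
    linarith
  have hs2 : s ^ 2 = (n : ℝ) - 1 := Real.sq_sqrt (by linarith)
  have hs1 : 1 ≤ s := by
    rw [show (1:ℝ) = Real.sqrt 1 from (Real.sqrt_one).symm]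
    exact Real.sqrt_le_sqrt hn1
  have hz : 0 < n := by omega
  set z : Fin n := ⟨0, hz⟩ with hzdef
  set d : Fin n → ℝ := fun i => if i = z then -s else 1 with hd
  set T : Matrix (Fin n) (Fin n) ℝ := Matrix.diagonal d with hT
  have hsum : ∀ a b : ℝ, ∑ i : Fin n, (if i = z then a else b) = a + ((n:ℝ) - 1) * b := by
    intro a b
    have h1 : ∀ i : Fin n, (if i = z then a else b) = (if i = z then a - b else 0) + b := by
      intro i; by_cases h : i = z <;> simp [h]
    simp_rw [h1]
    rw [Finset.sum_add_distrib, Finset.sum_ite_eq' Finset.univ z fun _ => a - b]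
    simp [Finset.card_univ]
    ring
  have htr : T.trace = s ^ 2 - s := by
    rw [hT, Matrix.trace_diagonal, hd]
    rw [hsum (-s) 1]
    rw [← hs2]; ring
  refine ⟨T, ?_, ?_, ?_⟩
  · intro h0
    have := congrFun (congrFun h0 z) z
    rw [hT, Matrix.diagonal_apply_eq] at this
    simp [hd] at this
    linarith
  · exact Matrix.isSymm_diagonal d
  · have hM : T.trace • T - T * T
        = Matrix.diagonal (fun i => T.trace * d i - d i * d i) := by
      rw [hT, Matrix.diagonal_mul_diagonal, ← Matrix.diagonal_smul, ← Matrix.diagonal_sub]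
      rfl
    rw [hM]
    rw [diag_clm_norm (fun i => T.trace * d i - d i * d i) (s ^ 3) (by positivity) ?_ z ?_]
    · -- RHS computation
      have hTt : Tᵀ = T := (Matrix.isSymm_diagonal d)
      rw [hTt, hT, Matrix.diagonal_mul_diagonal, Matrix.trace_diagonal]
      have : ∀ i, d i * d i = if i = z then s * s else 1 := by
        intro i
        by_cases h : i = z
        · simp [hd, h]
        · simp [hd, h]
      simp_rw [this]
      rw [hsum (s * s) 1, ← hs2]
      ring
    · intro i
      by_cases h : i = z <;> simp [hd, h, htr] <;> rw [abs_le] <;> constructor <;> nlinarith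
    · simp [hd, htr]
      rw [abs_eq (by positivity)]
      right; ring
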